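/- arXiv:2404.07172 — 2 statements merged into one kernel-verified Lean document; each statement's English description precedes it below -/
import Mathlib

section
/- Let f : ℝᵐ × ℝⁿ → ℝ be twice continuously differentiable and define the block matrix v'(x,y) = [[∇²ₓₓ f, ∇²ₓᵧ f], [−∇²ᵧₓ f, −∇²ᵧᵧ f]]. Then v'(x,y) + v'(x,y)ᵀ is negative semi-definite if and only if ∇²ₓₓ f(x,y) is negative semi-definite and ∇²ᵧᵧ f(x,y) is positive semi-definite. -/
open Matrix

variable {m n : ℕ}

/-- ∇²ₓₓ f as a matrix of second partial derivatives. -/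
noncomputable def hessXX (f : (Fin m → ℝ) × (Fin n → ℝ) → ℝ)
    (p : (Fin m → ℝ) × (Fin n → ℝ)) : Matrix (Fin m) (Fin m) ℝ :=
  fun i j => fderiv ℝ (fun q => fderiv ℝ f q (Pi.single j 1, 0)) p (Pi.single i 1, 0)

/-- ∇²ₓᵧ f as a matrix of second partial derivatives. -/
noncomputable def hessXY (f : (Fin m → ℝ) × (Fin n → ℝ) → ℝ)
    (p : (Fin m → ℝ) × (Fin n → ℝ)) : Matrix (Fin m) (Fin n) ℝ :=
  fun i j => fderiv ℝ (fun q => fderiv ℝ f q (0, Pi.single j 1)) p (Pi.single i 1, 0)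

/-- ∇²ᵧₓ f as a matrix of second partial derivatives. -/
noncomputable def hessYX (f : (Fin m → ℝ) × (Fin n → ℝ) → ℝ)
    (p : (Fin m → ℝ) × (Fin n → ℝ)) : Matrix (Fin n) (Fin m) ℝ :=
  fun i j => fderiv ℝ (fun q => fderiv ℝ f q (Pi.single j 1, 0)) p (0, Pi.single i 1)

/-- ∇²ᵧᵧ f as a matrix of second partial derivatives. -/
noncomputable def hessYY (f : (Fin m → ℝ) × (Fin n → ℝ) → ℝ)
    (p : (Fin m → ℝ) × (Fin n → ℝ)) : Matrix (Fin n) (Fin n) ℝ :=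
  fun i j => fderiv ℝ (fun q => fderiv ℝ f q (0, Pi.single j 1)) p (0, Pi.single i 1)

lemma fderiv_apply_comm {E : Type*} [NormedAddCommGroup E] [NormedSpace ℝ E]
    (f : E → ℝ) (hf : ContDiff ℝ 2 f) (p d e : E) :
    fderiv ℝ (fun q => fderiv ℝ f q d) p e = fderiv ℝ (fun q => fderiv ℝ f q e) p d := by
  have hd : DifferentiableAt ℝ (fderiv ℝ f) p :=
    ((hf.fderiv_right (m := 1) (by norm_num)).differentiable (by norm_num)) p
  have key : ∀ u v : E, fderiv ℝ (fun q => fderiv ℝ f q u) p v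
      = fderiv ℝ (fderiv ℝ f) p v u := by
    intro u v
    rw [fderiv_clm_apply hd (differentiableAt_const u)]
    simp
  rw [key, key, (hf.contDiffAt.isSymmSndFDerivAt (by simp)).eq]

lemma posSemidef_add_self_iff {k : ℕ} (X : Matrix (Fin k) (Fin k) ℝ) :
    (X + X).PosSemidef ↔ X.PosSemidef := by
  constructor
  · rw [posSemidef_iff_dotProduct_mulVec, posSemidef_iff_dotProduct_mulVec]; rintro ⟨h1, h2⟩
    refine ⟨?_, fun x => ?_⟩
    · have h1' : Xᴴ + Xᴴ = X + X := by rwa [Matrix.IsHermitian, conjTranspose_add] at h1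
      ext i j
      have h2' := congrFun (congrFun h1' i) j
      simp only [Matrix.add_apply] at h2'
      have h3 : Xᴴ i j = X i j := by linarith
      simpa using h3
    · have := h2 x
      simp only [Matrix.add_mulVec, dotProduct_add] at this
      linarith
  · intro h; exact h.add h

lemma posSemidef_fromBlocks_diag {P : Matrix (Fin m) (Fin m) ℝ} {Q : Matrix (Fin n) (Fin n) ℝ} :
    (Matrix.fromBlocks P 0 0 Q).PosSemidef ↔ P.PosSemidef ∧ Q.PosSemidef := by
  constructor
  · simp only [posSemidef_iff_dotProduct_mulVec]; rintro ⟨h1, h2⟩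
    rw [Matrix.IsHermitian, fromBlocks_conjTranspose] at h1
    refine ⟨⟨?_, fun x => ?_⟩, ⟨?_, fun y => ?_⟩⟩
    · ext i j
      have := congrFun (congrFun h1 (Sum.inl i)) (Sum.inl j)
      simpa using this
    · have := h2 (Sum.elim x 0)
      simpa [fromBlocks_mulVec, sumElim_dotProduct_sumElim, Sum.elim_comp_inl_inr] using this
    · ext i j
      have := congrFun (congrFun h1 (Sum.inr i)) (Sum.inr j)
      simpa using this
    · have := h2 (Sum.elim 0 y)
      simpa [fromBlocks_mulVec, sumElim_dotProduct_sumElim] using this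
  · simp only [posSemidef_iff_dotProduct_mulVec]; rintro ⟨⟨hP1, hP2⟩, ⟨hQ1, hQ2⟩⟩
    refine ⟨?_, fun z => ?_⟩
    · rw [Matrix.IsHermitian, fromBlocks_conjTranspose, hP1.eq, hQ1.eq]
      simp
    · have hsplit : star z ⬝ᵥ (Matrix.fromBlocks P 0 0 Q) *ᵥ z
          = star (z ∘ Sum.inl) ⬝ᵥ P *ᵥ (z ∘ Sum.inl) + star (z ∘ Sum.inr) ⬝ᵥ Q *ᵥ (z ∘ Sum.inr) := by
        rw [fromBlocks_mulVec]
        simp only [Matrix.zero_mulVec, add_zero, zero_add, star_trivial]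
        nth_rewrite 1 [← Sum.elim_comp_inl_inr z]
        rw [sumElim_dotProduct_sumElim]
      rw [hsplit]
      exact add_nonneg (hP2 _) (hQ2 _)

/-- For a C² zero-sum game, v' + v'ᵀ is negative semidefinite iff ∇²ₓₓ f is negative
    semidefinite and ∇²ᵧᵧ f is positive semidefinite. -/
theorem zero_sum_game_jacobian_negSemidef_iff
    (f : (Fin m → ℝ) × (Fin n → ℝ) → ℝ) (hf : ContDiff ℝ 2 f)
    (p : (Fin m → ℝ) × (Fin n → ℝ)) :
    (-(Matrix.fromBlocks (hessXX f p) (hessXY f p) (-(hessYX f p)) (-(hessYY f p)) +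
      (Matrix.fromBlocks (hessXX f p) (hessXY f p) (-(hessYX f p)) (-(hessYY f p)))ᵀ)).PosSemidef ↔
      (-(hessXX f p)).PosSemidef ∧ (hessYY f p).PosSemidef := by
  
  have hXY : hessXY f p = (hessYX f p)ᵀ := by
    ext i j
    exact fderiv_apply_comm f hf p (0, Pi.single j 1) (Pi.single i 1, 0)
  have hA : (hessXX f p)ᵀ = hessXX f p := by
    ext i j
    exact fderiv_apply_comm f hf p (Pi.single i 1, 0) (Pi.single j 1, 0)
  have hD : (hessYY f p)ᵀ = hessYY f p := by
    ext i j
    exact fderiv_apply_comm f hf p (0, Pi.single i 1) (0, Pi.single j 1)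
  have key : -(Matrix.fromBlocks (hessXX f p) (hessXY f p) (-(hessYX f p)) (-(hessYY f p)) +
      (Matrix.fromBlocks (hessXX f p) (hessXY f p) (-(hessYX f p)) (-(hessYY f p)))ᵀ)
      = Matrix.fromBlocks (-(hessXX f p) + -(hessXX f p)) 0 0
          (hessYY f p + hessYY f p) := by
    rw [hXY, fromBlocks_transpose, fromBlocks_add, fromBlocks_neg]
    rw [hA, transpose_neg, transpose_neg, transpose_transpose, hD]
    congr 1 <;> abel
  rw [key, posSemidef_fromBlocks_diag, posSemidef_add_self_iff, posSemidef_add_self_iff]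
end

section
/- Let v : ℝⁿ → ℝⁿ be continuously differentiable, λ ∈ (0,1), h > 0, and define F(p) = p + h[(λI + v(p)v(p)ᵀ)⁻¹ − I] v(p). Suppose p̄ satisfies v(p̄) = 0 and every eigenvalue ξ of v'(p̄) has Re(ξ) < 0 and h(1/λ − 1) < (1/|Re(ξ)|)·2/(1 + (Im(ξ)/Re(ξ))²). Then there is a neighborhood of p̄ on which the iterates pₖ₊₁ = F(pₖ) converge to p̄ at least linearly. -/
open Filter
open scoped NNReal ENNReal

section Aux
variable {n : ℕ}

lemma gn_vecMulVec_mul_self (u : Fin n → ℝ) :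
    Matrix.vecMulVec u u * Matrix.vecMulVec u u = (∑ i, u i ^ 2) • Matrix.vecMulVec u u := by
  ext i j
  simp only [Matrix.mul_apply, Matrix.vecMulVec_apply, Matrix.smul_apply, smul_eq_mul]
  rw [Finset.sum_mul]
  exact Finset.sum_congr rfl fun k _ => by ring

lemma gn_vecMulVec_mulVec (u : Fin n → ℝ) :
    (Matrix.vecMulVec u u).mulVec u = (∑ i, u i ^ 2) • u := by
  funext i
  simp only [Matrix.mulVec, dotProduct, Matrix.vecMulVec_apply, Pi.smul_apply,
    smul_eq_mul]
  rw [Finset.sum_mul]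
  exact Finset.sum_congr rfl fun k _ => by ring

lemma gn_SM (lam : ℝ) (hlam : 0 < lam) (u : Fin n → ℝ) :
    (lam • (1 : Matrix (Fin n) (Fin n) ℝ) + Matrix.vecMulVec u u)⁻¹.mulVec u
      = (lam + ∑ i, u i ^ 2)⁻¹ • u := by
  set s : ℝ := ∑ i, u i ^ 2 with hs
  have hs0 : 0 ≤ s := Finset.sum_nonneg fun i _ => sq_nonneg _
  have hls : lam + s ≠ 0 := by positivity
  set P : Matrix (Fin n) (Fin n) ℝ := Matrix.vecMulVec u u with hP
  set A : Matrix (Fin n) (Fin n) ℝ := lam • 1 + P with hA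
  set W : Matrix (Fin n) (Fin n) ℝ := lam⁻¹ • (1 - (lam + s)⁻¹ • P) with hW
  have hAP : A * P = (lam + s) • P := by
    rw [hA, add_mul, Matrix.smul_mul, one_mul, hP, gn_vecMulVec_mul_self, ← hs, add_smul]
  have hAW : A * W = 1 := by
    rw [hW, mul_smul_comm, mul_sub, mul_one, mul_smul_comm, hAP, smul_smul,
      inv_mul_cancel₀ hls, one_smul, hA, add_sub_cancel_right, smul_smul,
      inv_mul_cancel₀ (ne_of_gt hlam), one_smul]
  have hinv : A⁻¹ = W := Matrix.inv_eq_right_inv hAW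
  rw [hinv, hW, Matrix.smul_mulVec, Matrix.sub_mulVec, Matrix.one_mulVec,
    Matrix.smul_mulVec, hP, gn_vecMulVec_mulVec, ← hs]
  rw [smul_smul]
  have : u - ((lam + s)⁻¹ * s) • u = (1 - (lam + s)⁻¹ * s) • u := by
    rw [sub_smul, one_smul]
  rw [this, smul_smul]
  congr 1
  field_simp
  ring


lemma gn_mu_lt_one {c : ℝ} (hc : 0 < c) {ξ : ℂ} (hre : ξ.re < 0)
    (hineq : c < (1 / |ξ.re|) * (2 / (1 + (ξ.im / ξ.re) ^ 2))) :
    ‖1 + (c : ℂ) * ξ‖ < 1 := by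
  set a := ξ.re with ha'
  set b := ξ.im with hb'
  have ha : a ≠ 0 := ne_of_lt hre
  have hna : 0 < -a := by linarith
  have hd : 0 < 1 + (b / a) ^ 2 := by positivity
  rw [abs_of_neg hre] at hineq
  have h2 : c * (-a * (1 + (b / a) ^ 2)) < 2 := by
    rw [div_mul_div_comm, one_mul, lt_div_iff₀ (by positivity)] at hineq
    linarith [hineq]
  have hd2 : -a * (1 + (b / a) ^ 2) = (a ^ 2 + b ^ 2) / (-a) := by
    field_simp
  rw [hd2, ← mul_div_assoc, div_lt_iff₀ hna] at h2
  have key : c * (a ^ 2 + b ^ 2) < -2 * a := by linarith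
  have habs : ‖1 + (c : ℂ) * ξ‖ ^ 2 = (1 + c * a) ^ 2 + (c * b) ^ 2 := by
    rw [Complex.sq_norm, Complex.normSq_apply]
    simp only [Complex.add_re, Complex.add_im, Complex.mul_re, Complex.mul_im,
      Complex.one_re, Complex.one_im, Complex.ofReal_re, Complex.ofReal_im, ← ha', ← hb']
    ring
  nlinarith [norm_nonneg (1 + (c : ℂ) * ξ), habs, key, hc, sq_nonneg (c * b)]


lemma gn_spectrum_mem {c : ℝ} (hc : c ≠ 0) (M : Matrix (Fin n) (Fin n) ℂ)
    (μ : ℂ) (hμ : μ ∈ spectrum ℂ ((1 : Matrix (Fin n) (Fin n) ℂ) + (c : ℂ) • M)) :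
    ∃ ξ ∈ spectrum ℂ M, μ = 1 + (c : ℂ) * ξ := by
  have hcC : ((c : ℂ)) ≠ 0 := by exact_mod_cast hc
  have h1 : (1 : Matrix (Fin n) (Fin n) ℂ) + (c : ℂ) • M
      = algebraMap ℂ (Matrix (Fin n) (Fin n) ℂ) 1 + (Units.mk0 (c : ℂ) hcC) • M := by
    rw [map_one, Units.smul_def, Units.val_mk0]
  rw [h1, ← spectrum.singleton_add_eq, spectrum.unit_smul_eq_smul] at hμ
  obtain ⟨x, hx, y, hy, hxy⟩ := Set.mem_add.mp hμ
  obtain ⟨ξ, hξ, hξy⟩ := hy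
  refine ⟨ξ, hξ, ?_⟩
  rw [Set.mem_singleton_iff] at hx
  subst hx
  rw [← hxy, ← hξy]
  simp


lemma gn_hasFDerivAt (v : (Fin n → ℝ) → (Fin n → ℝ)) (hv : ContDiff ℝ 1 v)
    (lam h : ℝ) (hlam : 0 < lam) (pbar : Fin n → ℝ) (hp : v pbar = 0) :
    HasFDerivAt (fun p => p + (h * ((lam + ∑ i, v p i ^ 2)⁻¹ - 1)) • v p)
      (ContinuousLinearMap.id ℝ (Fin n → ℝ) + (h * (lam⁻¹ - 1)) • fderiv ℝ v pbar) pbar := by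
  have hvd : DifferentiableAt ℝ v pbar := (hv.differentiable one_ne_zero).differentiableAt
  have hD : HasFDerivAt v (fderiv ℝ v pbar) pbar := hvd.hasFDerivAt
  have hsum0 : ∑ i, v pbar i ^ 2 = 0 := by rw [hp]; simp
  have hsdiff : DifferentiableAt ℝ (fun p => ∑ i, v p i ^ 2) pbar :=
    DifferentiableAt.fun_sum fun i _ => (differentiableAt_pi.mp hvd i).pow 2
  have hne : lam + ∑ i, v pbar i ^ 2 ≠ 0 := by rw [hsum0, add_zero]; exact ne_of_gt hlam
  have hgd : DifferentiableAt ℝ (fun p => h * ((lam + ∑ i, v p i ^ 2)⁻¹ - 1)) pbar :=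
    ((((differentiableAt_const lam).add hsdiff).inv hne).sub (differentiableAt_const 1)).const_mul h
  have hsmul := hgd.hasFDerivAt.smul hD
  have heq : (h * ((lam + ∑ i, v pbar i ^ 2)⁻¹ - 1)) •
        (fderiv ℝ v pbar) + (fderiv ℝ (fun p => h * ((lam + ∑ i, v p i ^ 2)⁻¹ - 1)) pbar).smulRight (v pbar)
      = (h * (lam⁻¹ - 1)) • fderiv ℝ v pbar := by
    rw [hsum0, add_zero, hp]
    ext x
    simp
  rw [heq] at hsmul
  exact (hasFDerivAt_id pbar).add hsmul


end Aux

attribute [local instance] Matrix.linftyOpNormedAddCommGroup Matrix.linftyOpNormedRing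
  Matrix.linftyOpNormedAlgebra

instance gn_complete (n : ℕ) : CompleteSpace (Matrix (Fin n) (Fin n) ℂ) :=
  FiniteDimensional.complete ℂ (Matrix (Fin n) (Fin n) ℂ)

lemma gn_norm_map {n : ℕ} (A : Matrix (Fin n) (Fin n) ℝ) :
    ‖A.map (algebraMap ℝ ℂ)‖₊ = ‖A‖₊ := by
  rw [Matrix.linfty_opNNNorm_def, Matrix.linfty_opNNNorm_def]
  congr 1
  funext i
  congr 1
  funext j
  simp [Matrix.map_apply, Complex.coe_algebraMap, Complex.nnnorm_real]


lemma gn_pow_small {n : ℕ} (B : Matrix (Fin n) (Fin n) ℝ)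
    (hB : ∀ μ ∈ spectrum ℂ (B.map (algebraMap ℝ ℂ)), ‖μ‖ < 1) :
    ∃ θ : ℝ, 0 < θ ∧ θ < 1 ∧ ∃ m : ℕ, 1 ≤ m ∧ ‖B ^ m‖ ≤ θ ^ m := by
  set Bc := B.map (algebraMap ℝ ℂ) with hBc
  have hK : IsCompact (spectrum ℂ Bc) := spectrum.isCompact Bc
  obtain ⟨t, ht0, ht1, htb⟩ : ∃ t : ℝ, 0 ≤ t ∧ t < 1 ∧
      ∀ μ ∈ spectrum ℂ Bc, ‖μ‖ ≤ t := by
    rcases (spectrum ℂ Bc).eq_empty_or_nonempty with he | hne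
    · exact ⟨0, le_refl _, one_pos, by simp [he]⟩
    · obtain ⟨μ₀, hμ₀, hmax⟩ := hK.exists_isMaxOn hne continuous_norm.continuousOn
      exact ⟨‖μ₀‖, norm_nonneg _, hB μ₀ hμ₀, fun μ hμ => hmax hμ⟩
  set θ : ℝ := (t + 1) / 2 with hθ
  have hθ0 : 0 < θ := by positivity
  have hθ1 : θ < 1 := by rw [hθ]; linarith
  have htθ : t < θ := by rw [hθ]; linarith
  set θnn : ℝ≥0 := ⟨θ, le_of_lt hθ0⟩ with hθnn
  have hρ : spectralRadius ℂ Bc < (θnn : ℝ≥0∞) := by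
    have h1 : spectralRadius ℂ Bc ≤ ENNReal.ofReal t := by
      rw [spectralRadius]
      refine iSup₂_le fun μ hμ => ?_
      rw [← ENNReal.ofReal_coe_nnreal, coe_nnnorm]
      exact ENNReal.ofReal_le_ofReal (htb μ hμ)
    refine lt_of_le_of_lt h1 ?_
    have : (θnn : ℝ≥0∞) = ENNReal.ofReal θ := by
      rw [ENNReal.ofReal, Real.toNNReal_of_nonneg (le_of_lt hθ0)]
      rfl
    rw [this]
    exact (ENNReal.ofReal_lt_ofReal_iff hθ0).mpr htθ
  have hGel := spectrum.pow_nnnorm_pow_one_div_tendsto_nhds_spectralRadius Bc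
  have hev := hGel.eventually_lt_const hρ
  obtain ⟨m, hlt, hm1⟩ := (hev.and (eventually_ge_atTop 1)).exists
  refine ⟨θ, hθ0, hθ1, m, hm1, ?_⟩
  have hm0 : (m : ℝ) ≠ 0 := Nat.cast_ne_zero.mpr (by omega)
  have h2 : ((‖Bc ^ m‖₊ : ℝ≥0∞) ^ (1 / (m:ℝ))) ^ (m : ℝ) < (θnn : ℝ≥0∞) ^ (m : ℝ) :=
    ENNReal.rpow_lt_rpow hlt (by positivity)
  rw [← ENNReal.rpow_mul, one_div, inv_mul_cancel₀ hm0, ENNReal.rpow_one,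
    ENNReal.rpow_natCast, ← ENNReal.coe_pow] at h2
  have h3 : ‖Bc ^ m‖₊ < θnn ^ m := by exact_mod_cast h2
  have h4 : ‖B ^ m‖₊ = ‖Bc ^ m‖₊ := by
    rw [hBc]
    have : (B ^ m).map (algebraMap ℝ ℂ) = (B.map (algebraMap ℝ ℂ)) ^ m := by
      simpa [RingHom.mapMatrix_apply] using map_pow ((algebraMap ℝ ℂ).mapMatrix) B m
    rw [← this, gn_norm_map]
  have h5 : ‖B ^ m‖₊ ≤ θnn ^ m := by rw [h4]; exact le_of_lt h3
  calc ‖B ^ m‖ = ((‖B ^ m‖₊ : ℝ)) := rfl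
    _ ≤ ((θnn ^ m : ℝ≥0) : ℝ) := by exact_mod_cast h5
    _ = θ ^ m := by push_cast [hθnn]; rfl


/-- Main local convergence theorem for the Gauss–Newton min-max solver:
    with F(p) = p + h[(λI + v(p)v(p)ᵀ)⁻¹ − I]v(p), v(p̄) = 0, and the eigenvalue/step-size
    conditions, the iterates converge to p̄ at least linearly in a neighborhood of p̄. -/
theorem gauss_newton_minmax_local_convergence
    (n : ℕ) (v : (Fin n → ℝ) → (Fin n → ℝ)) (hv : ContDiff ℝ 1 v)
    (lam : ℝ) (hlam0 : 0 < lam) (hlam1 : lam < 1) (h : ℝ) (hh : 0 < h)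
    (F : (Fin n → ℝ) → (Fin n → ℝ))
    (hF : F = fun p => p + h • ((lam • (1 : Matrix (Fin n) (Fin n) ℝ) +
      Matrix.vecMulVec (v p) (v p))⁻¹ - 1).mulVec (v p))
    (pbar : Fin n → ℝ) (hp : v pbar = 0)
    (hspec : ∀ ξ ∈ spectrum ℂ
        ((LinearMap.toMatrix' ((fderiv ℝ v pbar : (Fin n → ℝ) →L[ℝ] (Fin n → ℝ)) :
          (Fin n → ℝ) →ₗ[ℝ] (Fin n → ℝ))).map (algebraMap ℝ ℂ)),
        ξ.re < 0 ∧
        h * (1 / lam - 1) < (1 / |ξ.re|) * (2 / (1 + (ξ.im / ξ.re) ^ 2))) :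
    ∃ U ∈ nhds pbar, ∀ p₀ ∈ U,
      ∃ C : ℝ, 0 < C ∧ ∃ r ∈ Set.Ico (0 : ℝ) 1,
        ∀ k : ℕ, ‖F^[k] p₀ - pbar‖ ≤ C * r ^ k := by
  rcases Nat.eq_zero_or_pos n with hn | hn
  · subst hn
    refine ⟨Set.univ, Filter.univ_mem, fun p₀ _ =>
      ⟨1, one_pos, 0, ⟨le_refl _, one_pos⟩, fun k => ?_⟩⟩
    have h0 : F^[k] p₀ - pbar = 0 := Subsingleton.elim _ _
    rw [h0, norm_zero]
    positivity
  haveI : Nonempty (Fin n) := Fin.pos_iff_nonempty.mp hn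
  -- basic constants
  set c : ℝ := h * (lam⁻¹ - 1) with hcdef
  have hc : 0 < c := by
    apply mul_pos hh
    have : 1 < lam⁻¹ := (one_lt_inv_iff₀).mpr ⟨hlam0, hlam1⟩
    linarith
  set D := fderiv ℝ v pbar with hDdef
  set M : Matrix (Fin n) (Fin n) ℝ :=
    LinearMap.toMatrix' (D : (Fin n → ℝ) →ₗ[ℝ] (Fin n → ℝ)) with hMdef
  set B : Matrix (Fin n) (Fin n) ℝ := 1 + c • M with hBdef
  -- representation of F
  have hFrep : F = fun p => p + (h * ((lam + ∑ i, v p i ^ 2)⁻¹ - 1)) • v p := by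
    rw [hF]
    funext p
    rw [Matrix.sub_mulVec, Matrix.one_mulVec, gn_SM lam hlam0 (v p)]
    congr 1
    rw [smul_sub, smul_smul, mul_sub, mul_one, sub_smul]
  have hsum0 : ∑ i, v pbar i ^ 2 = 0 := by rw [hp]; simp
  have hFfix : F pbar = pbar := by
    rw [hFrep]
    simp [hp]
  -- derivative
  have hT : HasFDerivAt F
      (ContinuousLinearMap.id ℝ (Fin n → ℝ) + c • D) pbar := by
    rw [hFrep]
    exact gn_hasFDerivAt v hv lam h hlam0 pbar hp
  set T := ContinuousLinearMap.id ℝ (Fin n → ℝ) + c • D with hTdef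
  have hM_mulVec : ∀ x, M.mulVec x = D x := by
    intro x
    rw [hMdef, ← Matrix.toLin'_apply, Matrix.toLin'_toMatrix']
    rfl
  have hTB : ∀ x, T x = B.mulVec x := by
    intro x
    rw [hBdef, Matrix.add_mulVec, Matrix.one_mulVec, Matrix.smul_mulVec, hM_mulVec]
    simp [hTdef]
  -- spectrum of B
  have hBspec : ∀ μ ∈ spectrum ℂ (B.map (algebraMap ℝ ℂ)), ‖μ‖ < 1 := by
    intro μ hμ
    have hmap : B.map (algebraMap ℝ ℂ)
        = (1 : Matrix (Fin n) (Fin n) ℂ) + (c : ℂ) • (M.map (algebraMap ℝ ℂ)) := by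
      ext i j
      simp [hBdef, Matrix.map_apply, Matrix.one_apply, apply_ite (algebraMap ℝ ℂ)]
      split_ifs <;> simp
    rw [hmap] at hμ
    obtain ⟨ξ, hξ, rfl⟩ := gn_spectrum_mem (ne_of_gt hc) _ μ hμ
    obtain ⟨hre, hineq⟩ := hspec ξ hξ
    refine gn_mu_lt_one hc hre ?_
    rw [one_div] at hineq
    exact hineq
  obtain ⟨θ, hθ0, hθ1, m, hm1, hBm⟩ := gn_pow_small B hBspec
  -- the adapted norm
  set N : (Fin n → ℝ) → ℝ := fun x => ∑ i ∈ Finset.range m, θ⁻¹ ^ i * ‖(B ^ i).mulVec x‖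
    with hNdef
  have hNnonneg : ∀ x, 0 ≤ N x := fun x =>
    Finset.sum_nonneg fun i _ => mul_nonneg (by positivity) (norm_nonneg _)
  have hN0 : ∀ x, ‖x‖ ≤ N x := by
    intro x
    rw [hNdef]
    refine le_trans ?_ (Finset.single_le_sum (f := fun i => θ⁻¹ ^ i * ‖(B ^ i).mulVec x‖)
      (fun i _ => mul_nonneg (by positivity) (norm_nonneg _)) (Finset.mem_range.mpr hm1))
    simp [Matrix.one_mulVec]
  set K : ℝ := ∑ i ∈ Finset.range m, θ⁻¹ ^ i * ‖B ^ i‖ with hKdef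
  have hNK : ∀ x, N x ≤ K * ‖x‖ := by
    intro x
    rw [hKdef, Finset.sum_mul]
    refine Finset.sum_le_sum fun i _ => ?_
    rw [mul_assoc]
    exact mul_le_mul_of_nonneg_left (Matrix.linfty_opNorm_mulVec _ _) (by positivity)
  have hK1 : (1:ℝ) ≤ K := by
    rw [hKdef]
    refine le_trans ?_ (Finset.single_le_sum (f := fun i => θ⁻¹ ^ i * ‖B ^ i‖)
      (fun i _ => mul_nonneg (by positivity) (norm_nonneg _)) (Finset.mem_range.mpr hm1))
    simp [norm_one]
  have hKpos : (0:ℝ) < K := lt_of_lt_of_le one_pos hK1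
  have hNadd : ∀ x y, N (x + y) ≤ N x + N y := by
    intro x y
    rw [hNdef]
    simp only
    rw [← Finset.sum_add_distrib]
    refine Finset.sum_le_sum fun i _ => ?_
    rw [Matrix.mulVec_add, ← mul_add]
    exact mul_le_mul_of_nonneg_left (norm_add_le _ _) (by positivity)
  have hNB : ∀ x, N (B.mulVec x) ≤ θ * N x := by
    intro x
    set g : ℕ → ℝ := fun j => θ⁻¹ ^ j * ‖(B ^ j).mulVec x‖ with hgdef
    have hg0 : g 0 = ‖x‖ := by simp [hgdef, Matrix.one_mulVec]
    have hgm : g m ≤ ‖x‖ := by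
      rw [hgdef]
      calc θ⁻¹ ^ m * ‖(B ^ m).mulVec x‖ ≤ θ⁻¹ ^ m * (‖B ^ m‖ * ‖x‖) :=
            mul_le_mul_of_nonneg_left (Matrix.linfty_opNorm_mulVec _ _) (by positivity)
        _ ≤ θ⁻¹ ^ m * (θ ^ m * ‖x‖) :=
            mul_le_mul_of_nonneg_left
              (mul_le_mul_of_nonneg_right hBm (norm_nonneg _)) (by positivity)
        _ = ‖x‖ := by rw [← mul_assoc, ← mul_pow, inv_mul_cancel₀ hθ0.ne', one_pow, one_mul]
    have hstep : N (B.mulVec x) = θ * ∑ i ∈ Finset.range m, g (i + 1) := by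
      rw [hNdef]
      simp only
      rw [Finset.mul_sum]
      refine Finset.sum_congr rfl fun i _ => ?_
      rw [Matrix.mulVec_mulVec, ← pow_succ, hgdef]
      have : θ * θ⁻¹ ^ (i + 1) = θ⁻¹ ^ i := by
        rw [pow_succ]
        field_simp
      rw [← mul_assoc, this]
    have hsum : ∑ i ∈ Finset.range m, g (i + 1) ≤ N x := by
      have h1 : ∑ i ∈ Finset.range (m + 1), g i
          = (∑ i ∈ Finset.range m, g (i + 1)) + g 0 := Finset.sum_range_succ' g m
      have h2 : ∑ i ∈ Finset.range (m + 1), g i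
          = (∑ i ∈ Finset.range m, g i) + g m := Finset.sum_range_succ g m
      have h3 : N x = ∑ i ∈ Finset.range m, g i := rfl
      rw [h3]
      have := h1.symm.trans h2
      rw [hg0] at this
      linarith [hgm]
    rw [hstep]
    exact mul_le_mul_of_nonneg_left hsum (le_of_lt hθ0)
  -- little-o estimate
  set θ' : ℝ := (1 + θ) / 2 with hθ'def
  have hθ'0 : 0 < θ' := by positivity
  have hθ'1 : θ' < 1 := by rw [hθ'def]; linarith
  have hθθ' : θ < θ' := by rw [hθ'def]; linarith
  set ε : ℝ := (θ' - θ) / K with hεdef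
  have hε : 0 < ε := div_pos (by linarith) hKpos
  have hlo := hT.isLittleO.def hε
  rw [Metric.eventually_nhds_iff] at hlo
  obtain ⟨δ, hδ0, hδ⟩ := hlo
  have key : ∀ p : Fin n → ℝ, N (p - pbar) < δ → N (F p - pbar) ≤ θ' * N (p - pbar) := by
    intro p hpδ
    have h1 : dist p pbar < δ := by
      rw [dist_eq_norm]; exact lt_of_le_of_lt (hN0 _) hpδ
    have h2 := hδ h1
    rw [hFfix] at h2
    have h3 : F p - pbar = B.mulVec (p - pbar) + (F p - pbar - T (p - pbar)) := by
      rw [← hTB]; abel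
    calc N (F p - pbar) ≤ N (B.mulVec (p - pbar)) + N (F p - pbar - T (p - pbar)) := by
          nth_rewrite 1 [h3]
          exact hNadd _ _
      _ ≤ θ * N (p - pbar) + K * ‖F p - pbar - T (p - pbar)‖ := add_le_add (hNB _) (hNK _)
      _ ≤ θ * N (p - pbar) + K * (ε * ‖p - pbar‖) :=
          add_le_add_right (mul_le_mul_of_nonneg_left h2 (le_of_lt hKpos)) _
      _ ≤ θ * N (p - pbar) + K * ε * N (p - pbar) := by
          rw [mul_assoc]
          exact add_le_add_right (mul_le_mul_of_nonneg_left
            (mul_le_mul_of_nonneg_left (hN0 _) (le_of_lt hε)) (le_of_lt hKpos)) _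
      _ = θ' * N (p - pbar) := by
          rw [hεdef]
          field_simp
          ring
  refine ⟨{p | N (p - pbar) < δ}, ?_, ?_⟩
  · rw [Metric.mem_nhds_iff]
    refine ⟨δ / K, by positivity, fun p hpmem => ?_⟩
    rw [Metric.mem_ball, dist_eq_norm] at hpmem
    show N (p - pbar) < δ
    calc N (p - pbar) ≤ K * ‖p - pbar‖ := hNK _
      _ < K * (δ / K) := mul_lt_mul_of_pos_left hpmem hKpos
      _ = δ := by field_simp
  · intro p₀ hp₀
    rw [Set.mem_setOf_eq] at hp₀
    have hiter : ∀ k : ℕ,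
        N (F^[k] p₀ - pbar) ≤ θ' ^ k * N (p₀ - pbar) ∧ N (F^[k] p₀ - pbar) < δ := by
      intro k
      induction k with
      | zero => exact ⟨by simp, by simpa using hp₀⟩
      | succ k ih =>
        obtain ⟨ih1, ih2⟩ := ih
        rw [Function.iterate_succ_apply']
        have hk := key _ ih2
        constructor
        · calc N (F (F^[k] p₀) - pbar) ≤ θ' * N (F^[k] p₀ - pbar) := hk
            _ ≤ θ' * (θ' ^ k * N (p₀ - pbar)) :=
                mul_le_mul_of_nonneg_left ih1 (le_of_lt hθ'0)
            _ = θ' ^ (k + 1) * N (p₀ - pbar) := by ring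
        · calc N (F (F^[k] p₀) - pbar) ≤ θ' * N (F^[k] p₀ - pbar) := hk
            _ ≤ 1 * N (F^[k] p₀ - pbar) :=
                mul_le_mul_of_nonneg_right (le_of_lt hθ'1) (hNnonneg _)
            _ < δ := by rw [one_mul]; exact ih2
    refine ⟨δ, hδ0, θ', ⟨le_of_lt hθ'0, hθ'1⟩, fun k => ?_⟩
    obtain ⟨h1, -⟩ := hiter k
    calc ‖F^[k] p₀ - pbar‖ ≤ N (F^[k] p₀ - pbar) := hN0 _
      _ ≤ θ' ^ k * N (p₀ - pbar) := h1
      _ ≤ θ' ^ k * δ := mul_le_mul_of_nonneg_left (le_of_lt hp₀) (by positivity)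
      _ = δ * θ' ^ k := by ring
end
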